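/- If L, M ∈ ℝ^{Nd×Nd} are block lower triangular and dist_AW(L, M) = 0, then LLᵀ = MMᵀ. -/

import Mathlib

open Matrix BigOperators Classical

/-- Squared Frobenius norm. -/
def frobSq {m n : Type*} [Fintype m] [Fintype n] (C : Matrix m n ℝ) : ℝ :=
  ∑ i, ∑ j, (C i j) ^ 2

/-- Frobenius norm. -/
noncomputable def frobNorm {m n : Type*} [Fintype m] [Fintype n]
    (C : Matrix m n ℝ) : ℝ :=
  Real.sqrt (frobSq C)

/-- Square root of a positive semidefinite matrix (junk value `0` otherwise). -/
noncomputable def psdSqrt {n : Type*} [Fintype n] [DecidableEq n]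
    (A : Matrix n n ℝ) : Matrix n n ℝ :=
  if h : A.PosSemidef then
    (h.1.eigenvectorUnitary : Matrix n n ℝ) *
      diagonal ((↑) ∘ Real.sqrt ∘ h.1.eigenvalues) *
      (star h.1.eigenvectorUnitary : Matrix n n ℝ)
  else 0

/-- Nuclear norm: `‖C‖₊ = tr((CᵀC)^{1/2})`, the sum of the singular values. -/
noncomputable def nuclearNorm {m n : Type*} [Fintype m] [Fintype n] [DecidableEq n]
    (C : Matrix m n ℝ) : ℝ :=
  (psdSqrt (Cᵀ * C)).trace

/-- Squared Bures–Wasserstein distance: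
`dist_BW²(A,B) = tr A + tr B − 2 tr((A^{1/2} B A^{1/2})^{1/2})`. -/
noncomputable def distBWsq {n : Type*} [Fintype n] [DecidableEq n]
    (A B : Matrix n n ℝ) : ℝ :=
  A.trace + B.trace - 2 * (psdSqrt (psdSqrt A * B * psdSqrt A)).trace

variable {N d : ℕ}

/-- `L` is block lower triangular: all `d×d` blocks `L_{s,t}` with `s < t` vanish. -/
def BlockLowerTri (L : Matrix (Fin N × Fin d) (Fin N × Fin d) ℝ) : Prop :=
  ∀ s t : Fin N, s < t → ∀ i j : Fin d, L (s, i) (t, j) = 0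

/-- The `t`-th `d×d` diagonal block of a matrix. -/
def diagBlock (A : Matrix (Fin N × Fin d) (Fin N × Fin d) ℝ) (t : Fin N) :
    Matrix (Fin d) (Fin d) ℝ :=
  fun i j => A (t, i) (t, j)

/-- The `t`-th column block `L_{·,t} ∈ ℝ^{Nd×d}` of `L`. -/
def colBlock (L : Matrix (Fin N × Fin d) (Fin N × Fin d) ℝ) (t : Fin N) :
    Matrix (Fin N × Fin d) (Fin d) ℝ :=
  fun p j => L p (t, j)

/-- Block diagonal matrix built from `d×d` blocks `Q₁, …, Q_N`. -/
def blockDiag (Q : Fin N → Matrix (Fin d) (Fin d) ℝ) :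
    Matrix (Fin N × Fin d) (Fin N × Fin d) ℝ :=
  fun p q => if p.1 = q.1 then Q q.1 p.2 q.2 else 0

/-- Squared adapted Wasserstein pseudo-distance between Cholesky factors:
`dist_AW²(L,M) = ‖L‖_F² + ‖M‖_F² − 2 ∑_t ‖(LᵀM)_{t,t}‖₊`. -/
noncomputable def distAWsq (L M : Matrix (Fin N × Fin d) (Fin N × Fin d) ℝ) : ℝ :=
  frobSq L + frobSq M - 2 * ∑ t : Fin N, nuclearNorm (diagBlock (Lᵀ * M) t)

/-- Adapted Wasserstein pseudo-distance. -/
noncomputable def distAW (L M : Matrix (Fin N × Fin d) (Fin N × Fin d) ℝ) : ℝ :=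
  Real.sqrt (distAWsq L M)

open scoped RealInnerProductSpace

lemma dot_mulVec_self {n m : Type*} [Fintype n] [Fintype m] (A : Matrix m n ℝ) (v : n → ℝ) :
    (A *ᵥ v) ⬝ᵥ (A *ᵥ v) = v ⬝ᵥ ((Aᵀ * A) *ᵥ v) := by
  conv_rhs => rw [← mulVec_mulVec, dotProduct_mulVec, vecMul_transpose]

lemma polar {n : Type*} [Fintype n] [DecidableEq n] (C : Matrix n n ℝ) :
    ∃ Q : Matrix n n ℝ, Qᵀ * Q = 1 ∧ C = Q * psdSqrt (Cᵀ * C) := by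
  have hP : (Cᵀ * C).PosSemidef := by
    have := Matrix.posSemidef_conjTranspose_mul_self C
    rwa [conjTranspose_eq_transpose_of_trivial] at this
  have hPeq : psdSqrt (Cᵀ * C) = (hP.1.eigenvectorUnitary : Matrix n n ℝ) *
      diagonal ((↑) ∘ Real.sqrt ∘ hP.1.eigenvalues) *
      (star hP.1.eigenvectorUnitary : Matrix n n ℝ) := by rw [psdSqrt, dif_pos hP]
  set P := psdSqrt (Cᵀ * C) with hPdef
  have hPsd : P.PosSemidef := by
    rw [hPeq]
    have hD : (diagonal ((↑) ∘ Real.sqrt ∘ hP.1.eigenvalues) : Matrix n n ℝ).PosSemidef :=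
      PosSemidef.diagonal (fun i => by simp [Real.sqrt_nonneg])
    have := hD.mul_mul_conjTranspose_same (hP.1.eigenvectorUnitary : Matrix n n ℝ)
    rwa [Matrix.star_eq_conjTranspose]
  have hPP : P * P = Cᵀ * C := by
    rw [hPeq]
    conv_rhs => rw [hP.1.spectral_theorem, Unitary.conjStarAlgAut_apply]
    have hUU := Unitary.coe_star_mul_self hP.1.eigenvectorUnitary
    have hDD : (diagonal ((↑) ∘ Real.sqrt ∘ hP.1.eigenvalues) : Matrix n n ℝ) *
        diagonal ((↑) ∘ Real.sqrt ∘ hP.1.eigenvalues) =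
        diagonal ((RCLike.ofReal) ∘ hP.1.eigenvalues) := by
      rw [diagonal_mul_diagonal]; congr 1; funext i
      simp [Real.mul_self_sqrt (hP.eigenvalues_nonneg i)]
    rw [← hDD]
    simp only [Matrix.mul_assoc]
    rw [← Matrix.mul_assoc (star _ : Matrix n n ℝ) _ _, hUU, Matrix.one_mul]
  have hPsym : Pᵀ = P := by
    have := hPsd.isHermitian
    rwa [Matrix.IsHermitian, conjTranspose_eq_transpose_of_trivial] at this
  set p := Matrix.toEuclideanLin P with hp
  set c := Matrix.toEuclideanLin C with hc
  have hinner : ∀ x : EuclideanSpace ℝ n, ⟪p x, p x⟫ = ⟪c x, c x⟫ := by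
    intro x
    simp only [hp, hc, Matrix.toEuclideanLin_apply, PiLp.inner_apply, RCLike.inner_apply,
      starRingEnd_apply, star_trivial, WithLp.equiv_apply, PiLp.toLp_apply]
    have h1 := dot_mulVec_self P ((WithLp.equiv 2 (n → ℝ)) x)
    have h2 := dot_mulVec_self C ((WithLp.equiv 2 (n → ℝ)) x)
    rw [hPsym, hPP] at h1
    simpa [dotProduct] using h1.trans h2.symm
  have hnorm : ∀ x : EuclideanSpace ℝ n, ‖p x‖ = ‖c x‖ := by
    intro x
    have h := hinner x
    rw [real_inner_self_eq_norm_sq, real_inner_self_eq_norm_sq] at h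
    rw [← Real.sqrt_sq (norm_nonneg (p x)), ← Real.sqrt_sq (norm_nonneg (c x)), h]
  have hker : LinearMap.ker p ≤ LinearMap.ker c := by
    intro x hx
    have : ‖c x‖ = 0 := by rw [← hnorm x, LinearMap.mem_ker.mp hx, norm_zero]
    exact LinearMap.mem_ker.mpr (norm_eq_zero.mp this)
  set ψ : LinearMap.range p →ₗ[ℝ] EuclideanSpace ℝ n :=
    ((LinearMap.ker p).liftQ c hker).comp (p.quotKerEquivRange.symm : _ →ₗ[ℝ] _) with hψdef
  have hψ : ∀ x : EuclideanSpace ℝ n, ψ ⟨p x, LinearMap.mem_range_self p x⟩ = c x := by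
    intro x
    have h1 : p.quotKerEquivRange.symm ⟨p x, LinearMap.mem_range_self p x⟩
        = (LinearMap.ker p).mkQ x := LinearMap.quotKerEquivRange_symm_apply_image p x _
    simp [hψdef, h1]
  have hiso : ∀ y : LinearMap.range p, ‖ψ y‖ = ‖y‖ := by
    rintro ⟨y, x, rfl⟩
    rw [hψ x]
    exact (hnorm x).symm
  set U := LinearIsometry.extend ⟨ψ, hiso⟩ with hUdef
  have hU : ∀ x : EuclideanSpace ℝ n, U (p x) = c x := by
    intro x
    have := LinearIsometry.extend_apply ⟨ψ, hiso⟩ ⟨p x, LinearMap.mem_range_self p x⟩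
    rw [hUdef]
    exact this.trans (hψ x)
  set Q := Matrix.toEuclideanLin.symm (U.toLinearMap : EuclideanSpace ℝ n →ₗ[ℝ] EuclideanSpace ℝ n) with hQdef
  have hQl : Matrix.toEuclideanLin Q = U.toLinearMap := by
    rw [hQdef]; exact Matrix.toEuclideanLin.apply_symm_apply _
  have hQU : ∀ x : EuclideanSpace ℝ n, Matrix.toEuclideanLin Q x = U x := fun x => by rw [hQl]; rfl
  have hmul : ∀ (A B : Matrix n n ℝ) (x : EuclideanSpace ℝ n),
      Matrix.toEuclideanLin (A * B) x = Matrix.toEuclideanLin A (Matrix.toEuclideanLin B x) := by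
    intro A B x
    simp [Matrix.toEuclideanLin_apply, Matrix.mulVec_mulVec]
  refine ⟨Q, ?_, ?_⟩
  · have hsingle : ∀ i : n, Matrix.toEuclideanLin Q (EuclideanSpace.single i (1:ℝ))
        = (WithLp.equiv 2 (n → ℝ)).symm (fun k => Q k i) := by
      intro i
      rw [EuclideanSpace.single, ← PiLp.toLp_single, Matrix.toEuclideanLin_apply_piLp_toLp,
        WithLp.equiv_symm_apply]
      congr 1
      rw [Matrix.mulVec_single]
      simp
      rfl
    ext i j
    have h := U.inner_map_map (EuclideanSpace.single i (1:ℝ)) (EuclideanSpace.single j (1:ℝ))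
    rw [← hQU, ← hQU, hsingle, hsingle] at h
    rw [EuclideanSpace.inner_single_left, EuclideanSpace.single_apply] at h
    simp only [PiLp.inner_apply, RCLike.inner_apply, starRingEnd_apply, star_trivial,
      WithLp.equiv_symm_apply, PiLp.toLp_apply, _root_.map_one, one_mul] at h
    rw [Matrix.mul_apply, Matrix.one_apply]
    simpa [Matrix.transpose_apply, eq_comm, mul_comm] using h
  · apply Matrix.toEuclideanLin.injective
    apply LinearMap.ext
    intro x
    rw [hmul, hQU, hU]

lemma frobSq_nonneg' {m n : Type*} [Fintype m] [Fintype n] (C : Matrix m n ℝ) :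
    0 ≤ frobSq C :=
  Finset.sum_nonneg fun _ _ => Finset.sum_nonneg fun _ _ => sq_nonneg _

lemma eq_zero_of_frobSq_eq_zero {m n : Type*} [Fintype m] [Fintype n]
    {C : Matrix m n ℝ} (h : frobSq C = 0) : C = 0 := by
  ext i j
  have h1 := (Finset.sum_eq_zero_iff_of_nonneg
    (fun i _ => Finset.sum_nonneg fun j _ => sq_nonneg (C i j))).mp h i (Finset.mem_univ i)
  have h2 := (Finset.sum_eq_zero_iff_of_nonneg
    (fun j _ => sq_nonneg (C i j))).mp h1 j (Finset.mem_univ j)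
  simpa using pow_eq_zero_iff (two_ne_zero) |>.mp h2

lemma traceTransMul {m n : Type*} [Fintype m] [Fintype n] (A B : Matrix m n ℝ) :
    (Bᵀ * A).trace = ∑ i, ∑ j, A i j * B i j := by
  rw [Matrix.trace]
  simp only [Matrix.diag, Matrix.mul_apply, Matrix.transpose_apply]
  rw [Finset.sum_comm]
  exact Finset.sum_congr rfl fun i _ => Finset.sum_congr rfl fun j _ => mul_comm _ _

lemma frobSq_eq_trace {m n : Type*} [Fintype m] [Fintype n] (B : Matrix m n ℝ) :
    frobSq B = (Bᵀ * B).trace := by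
  rw [traceTransMul, frobSq]
  exact Finset.sum_congr rfl fun i _ => Finset.sum_congr rfl fun j _ => by rw [sq]

lemma frobSq_sub_expand {m n : Type*} [Fintype m] [Fintype n] (A B : Matrix m n ℝ) :
    frobSq (A - B) = frobSq A + frobSq B - 2 * (Bᵀ * A).trace := by
  rw [traceTransMul]
  simp only [frobSq, Matrix.sub_apply]
  rw [Finset.mul_sum, ← Finset.sum_add_distrib, ← Finset.sum_sub_distrib]
  refine Finset.sum_congr rfl fun i _ => ?_
  rw [Finset.mul_sum, ← Finset.sum_add_distrib, ← Finset.sum_sub_distrib]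
  exact Finset.sum_congr rfl fun j _ => by ring

lemma frobSq_mul_orth {m n : Type*} [Fintype m] [Fintype n] [DecidableEq n]
    (B : Matrix m n ℝ) (S : Matrix n n ℝ) (hS : S * Sᵀ = 1) :
    frobSq (B * S) = frobSq B := by
  rw [frobSq_eq_trace, frobSq_eq_trace, Matrix.transpose_mul, Matrix.mul_assoc,
    ← Matrix.mul_assoc Bᵀ B S, ← Matrix.mul_assoc, Matrix.trace_mul_cycle,
    ← Matrix.mul_assoc, hS, Matrix.one_mul]

lemma key_exists {m n : Type*} [Fintype m] [Fintype n] [DecidableEq n] (A B : Matrix m n ℝ) :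
    ∃ S : Matrix n n ℝ, S * Sᵀ = 1 ∧
      frobSq (A - B * S) = frobSq A + frobSq B - 2 * nuclearNorm (Aᵀ * B) := by
  obtain ⟨Q, hQ, hC⟩ := polar (Aᵀ * B)
  refine ⟨Qᵀ, by rw [Matrix.transpose_transpose]; exact hQ, ?_⟩
  rw [frobSq_sub_expand, frobSq_mul_orth B Qᵀ (by rw [Matrix.transpose_transpose]; exact hQ)]
  have : ((B * Qᵀ)ᵀ * A).trace = nuclearNorm (Aᵀ * B) := by
    calc ((B * Qᵀ)ᵀ * A).trace = (Q * (Bᵀ * A)).trace := by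
          rw [Matrix.transpose_mul, Matrix.transpose_transpose, Matrix.mul_assoc]
      _ = (Q * (Aᵀ * B)ᵀ).trace := by rw [Matrix.transpose_mul, Matrix.transpose_transpose]
      _ = (Q * ((psdSqrt ((Aᵀ * B)ᵀ * (Aᵀ * B)))ᵀ * Qᵀ)).trace := by
          rw [← Matrix.transpose_mul, ← hC]
      _ = (Qᵀ * Q * (psdSqrt ((Aᵀ * B)ᵀ * (Aᵀ * B)))ᵀ).trace := by
          rw [← Matrix.mul_assoc, Matrix.trace_mul_cycle]
      _ = nuclearNorm (Aᵀ * B) := by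
          rw [hQ, Matrix.one_mul, Matrix.trace_transpose, nuclearNorm]
  rw [this]

lemma frobSq_blocks {N d : ℕ} (L : Matrix (Fin N × Fin d) (Fin N × Fin d) ℝ) :
    frobSq L = ∑ t, frobSq (colBlock L t) := by
  simp only [frobSq, colBlock]
  calc ∑ p, ∑ q : Fin N × Fin d, (L p q) ^ 2
      = ∑ p, ∑ t, ∑ j, (L p (t, j)) ^ 2 :=
        Finset.sum_congr rfl fun p _ => by rw [Fintype.sum_prod_type]
    _ = ∑ t, ∑ p, ∑ j, (L p (t, j)) ^ 2 := Finset.sum_comm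

lemma mul_transpose_blocks {N d : ℕ} (L : Matrix (Fin N × Fin d) (Fin N × Fin d) ℝ) :
    L * Lᵀ = ∑ t, colBlock L t * (colBlock L t)ᵀ := by
  ext p q
  simp only [Matrix.mul_apply, Matrix.sum_apply, Matrix.transpose_apply, colBlock]
  rw [Fintype.sum_prod_type]

lemma diagBlock_transpose_mul {N d : ℕ} (L M : Matrix (Fin N × Fin d) (Fin N × Fin d) ℝ)
    (t : Fin N) : diagBlock (Lᵀ * M) t = (colBlock L t)ᵀ * colBlock M t := by
  ext i j
  rfl

theorem distAW_eq_zero_same_cov' (N d : ℕ)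
    (L M : Matrix (Fin N × Fin d) (Fin N × Fin d) ℝ)
    (h : distAW L M = 0) :
    L * Lᵀ = M * Mᵀ := by
  have h0 : distAWsq L M ≤ 0 := Real.sqrt_eq_zero'.mp h
  choose S hS1 hS2 using fun t => key_exists (colBlock L t) (colBlock M t)
  have hsum : ∑ t, frobSq (colBlock L t - colBlock M t * S t) = distAWsq L M := by
    simp_rw [hS2, ← diagBlock_transpose_mul]
    rw [distAWsq, frobSq_blocks L, frobSq_blocks M, Finset.mul_sum,
      Finset.sum_sub_distrib, Finset.sum_add_distrib]
  have hzero : ∑ t, frobSq (colBlock L t - colBlock M t * S t) = 0 :=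
    le_antisymm (hsum ▸ h0) (Finset.sum_nonneg fun t _ => frobSq_nonneg' _)
  have hterm : ∀ t, colBlock L t = colBlock M t * S t := by
    intro t
    have := (Finset.sum_eq_zero_iff_of_nonneg (fun t _ => frobSq_nonneg' _)).mp hzero t
      (Finset.mem_univ t)
    exact sub_eq_zero.mp (eq_zero_of_frobSq_eq_zero this)
  rw [mul_transpose_blocks L, mul_transpose_blocks M]
  refine Finset.sum_congr rfl fun t _ => ?_
  rw [hterm t, Matrix.transpose_mul, Matrix.mul_assoc, ← Matrix.mul_assoc (S t), hS1,
    Matrix.one_mul]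

/-- If `dist_AW(L,M) = 0` then the covariance matrices coincide: `LLᵀ = MMᵀ`. -/
theorem distAW_eq_zero_same_cov (N d : ℕ)
    (L M : Matrix (Fin N × Fin d) (Fin N × Fin d) ℝ)
    (hL : BlockLowerTri L) (hM : BlockLowerTri M)
    (h : distAW L M = 0) :
    L * Lᵀ = M * Mᵀ := by
  exact distAW_eq_zero_same_cov' N d L M h
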